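/- Let C be a q×q simple circuit matrix and let D be the q×q diagonal matrix whose i-th diagonal entry is the i-th row sum of C. Then the 2q×2q block matrix A = (1/(2·tr D)) · [[D, C],[Cᵀ, D]] is a density matrix and is separable in ℂ^2 ⊗ ℂ^q. -/

import Mathlib

open Matrix BigOperators Kronecker
open scoped ComplexOrder

noncomputable section

/-- The `(p,q)`-partial transpose of a matrix indexed by `Fin p × Fin q`:
`A^pT_{(i,j),(k,l)} = A_{(i,l),(k,j)}`. -/
def ptrans {p q : ℕ} {α : Type*} (A : Matrix (Fin p × Fin q) (Fin p × Fin q) α) :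
    Matrix (Fin p × Fin q) (Fin p × Fin q) α :=
  fun x y => A (x.1, y.2) (y.1, x.2)

/-- A density matrix: Hermitian, positive semidefinite, with trace 1. -/
def IsDensityMatrix {n : Type*} [Fintype n] (ρ : Matrix n n ℂ) : Prop :=
  ρ.IsHermitian ∧ ρ.PosSemidef ∧ ρ.trace = 1

/-- Separability in ℂ^p ⊗ ℂ^q : a finite convex combination of Kronecker products
of density matrices. -/
def SeparableState {p q : ℕ} (A : Matrix (Fin p × Fin q) (Fin p × Fin q) ℂ) : Prop :=
  ∃ (m : ℕ) (c : Fin m → ℝ) (ρ : Fin m → Matrix (Fin p) (Fin p) ℂ)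
    (η : Fin m → Matrix (Fin q) (Fin q) ℂ),
    (∀ i, 0 ≤ c i) ∧ (∑ i, c i) = 1 ∧
    (∀ i, IsDensityMatrix (ρ i)) ∧ (∀ i, IsDensityMatrix (η i)) ∧
    A = ∑ i, (c i : ℂ) • (ρ i ⊗ₖ η i)

/-- Separability of a real matrix, viewed as a complex matrix. -/
def SeparableStateR {p q : ℕ} (A : Matrix (Fin p × Fin q) (Fin p × Fin q) ℝ) : Prop :=
  SeparableState (A.map (fun x => (x : ℂ)))

/-- A square real matrix is line sum symmetric if each row sum equals the
corresponding column sum. -/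
def LineSumSymm {q : ℕ} (B : Matrix (Fin q) (Fin q) ℝ) : Prop :=
  ∀ j, (∑ l, B j l) = ∑ l, B l j

/-- A simple circuit matrix: there are distinct indices `i_1, …, i_k` (`k ≥ 1`) with
`C_{i_m i_{m+1}} = 1` (cyclically) and all other entries 0. -/
def IsSimpleCircuit {q : ℕ} (C : Matrix (Fin q) (Fin q) ℝ) : Prop :=
  ∃ (k : ℕ) (hk : 0 < k) (f : Fin k → Fin q), Function.Injective f ∧
    ∀ a b : Fin q, C a b =
      if ∃ m : Fin k, a = f m ∧ b = f ⟨((m : ℕ) + 1) % k, Nat.mod_lt _ hk⟩ then 1 else 0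

/-- The 2q×2q block matrix `[[A11, A12], [A21, A22]]` indexed by `Fin 2 × Fin q`. -/
def twoBlock {q : ℕ} {α : Type*} (A11 A12 A21 A22 : Matrix (Fin q) (Fin q) α) :
    Matrix (Fin 2 × Fin q) (Fin 2 × Fin q) α :=
  fun a b =>
    if a.1 = 0 then (if b.1 = 0 then A11 a.2 b.2 else A12 a.2 b.2)
    else (if b.1 = 0 then A21 a.2 b.2 else A22 a.2 b.2)

/-- The q×q block `A^{i,k}` of a matrix indexed by `Fin p × Fin q`. -/
def blockOf {p q : ℕ} (A : Matrix (Fin p × Fin q) (Fin p × Fin q) ℝ) (i k : Fin p) :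
    Matrix (Fin q) (Fin q) ℝ :=
  fun j l => A (i, j) (k, l)

/-! ### Auxiliary lemmas -/

lemma aux_dvd {k : ℤ} (hk : 0 < k) {x : ℤ} (h1 : -k ≤ x) (h2 : x < k) :
    k ∣ x ↔ x = 0 ∨ x = -k := by
  constructor
  · rintro ⟨c, rfl⟩
    have hc : c = 0 ∨ c = -1 := by
      by_contra hcon
      push_neg at hcon
      have h3 : c ≤ -2 ∨ 1 ≤ c := by omega
      rcases h3 with h3 | h3
      · nlinarith
      · nlinarith
    rcases hc with rfl | rfl
    · left; ring
    · right; ring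
  · rintro (rfl | rfl)
    · exact dvd_zero k
    · exact ⟨-1, by ring⟩

lemma sum_ite_exists {k : ℕ} (P : Fin k → Prop) [DecidablePred P]
    (h : ∀ m n, P m → P n → m = n) :
    (if ∃ m, P m then (1:ℝ) else 0) = ∑ m, if P m then (1:ℝ) else 0 := by
  by_cases h' : ∃ m, P m
  · obtain ⟨m, hm⟩ := h'
    rw [if_pos ⟨m, hm⟩, Finset.sum_eq_single m]
    · rw [if_pos hm]
    · intro b _ hb
      rw [if_neg fun hPb => hb (h b m hPb hm)]
    · intro hmem; exact absurd (Finset.mem_univ m) hmem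
  · rw [if_neg h', eq_comm]
    refine Finset.sum_eq_zero fun m _ => ?_
    rw [if_neg fun hp => h' ⟨m, hp⟩]

lemma sum_exp_root {k : ℕ} (hk : 0 < k) (d : ℤ) :
    ∑ t ∈ Finset.range k, Complex.exp (2 * Real.pi * Complex.I * d / k) ^ t
      = if (k:ℤ) ∣ d then (k:ℂ) else 0 := by
  have hk0 : (k:ℂ) ≠ 0 := Nat.cast_ne_zero.mpr hk.ne'
  set z : ℂ := Complex.exp (2 * Real.pi * Complex.I * d / k) with hz
  have hzk : z ^ k = 1 := by
    rw [hz, ← Complex.exp_nat_mul]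
    have : (k:ℂ) * (2 * Real.pi * Complex.I * d / k) = d * (2 * Real.pi * Complex.I) := by
      field_simp
    rw [this, Complex.exp_int_mul_two_pi_mul_I]
  by_cases hd : (k:ℤ) ∣ d
  · obtain ⟨e, rfl⟩ := hd
    have harg : (2 * (Real.pi:ℂ) * Complex.I * (((k:ℤ) * e : ℤ) : ℂ) / (k:ℂ))
        = (e:ℤ) * (2 * Real.pi * Complex.I) := by
      push_cast
      field_simp
    have hz1 : z = 1 := by
      rw [hz, harg, Complex.exp_int_mul_two_pi_mul_I]
    rw [if_pos ⟨e, rfl⟩]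
    simp [hz1]
  · have hz1 : z ≠ 1 := by
      intro h1
      rw [hz, Complex.exp_eq_one_iff] at h1
      obtain ⟨n, hn⟩ := h1
      have hpi : (Real.pi : ℂ) ≠ 0 := Complex.ofReal_ne_zero.mpr Real.pi_ne_zero
      have hI : Complex.I ≠ 0 := Complex.I_ne_zero
      have hcast : (d : ℂ) = n * k := by
        field_simp at hn
        have h2 : (2 * (Real.pi:ℂ) * Complex.I) * (d:ℂ)
            = (2 * (Real.pi:ℂ) * Complex.I) * ((n:ℂ) * k) := by
          rw [mul_comm] at hn ⊢
          linear_combination (2 * (Real.pi:ℂ) * Complex.I) * hn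
        exact mul_left_cancel₀ (mul_ne_zero (mul_ne_zero two_ne_zero hpi) hI) h2
      have hdk : d = n * k := by exact_mod_cast hcast
      exact hd ⟨n, by rw [hdk, mul_comm]⟩
    rw [geom_sum_eq hz1, hzk, if_neg hd]
    simp

/-! ### Roots of unity -/

def wc (k : ℕ) (d : ℤ) : ℂ := Complex.exp (2 * Real.pi * Complex.I * d / k)

lemma wc_mul (k : ℕ) (a b : ℤ) : wc k a * wc k b = wc k (a + b) := by
  rw [wc, wc, wc, ← Complex.exp_add]
  congr 1
  push_cast
  ring

lemma wc_zero (k : ℕ) : wc k 0 = 1 := by simp [wc]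

lemma wc_conj (k : ℕ) (d : ℤ) : (starRingEnd ℂ) (wc k d) = wc k (-d) := by
  rw [wc, wc, ← Complex.exp_conj]
  congr 1
  simp only [map_div₀, _root_.map_mul, map_ofNat, Complex.conj_I, Complex.conj_ofReal, map_intCast,
    map_natCast]
  push_cast
  ring

lemma wc_sum {k : ℕ} (hk : 0 < k) (d : ℤ) :
    ∑ t : Fin k, wc k (d * (t:ℤ)) = if (k:ℤ) ∣ d then (k:ℂ) else 0 := by
  rw [← sum_exp_root hk d, Fin.sum_univ_eq_sum_range (fun t => wc k (d * (t:ℤ)))]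
  refine Finset.sum_congr rfl fun t _ => ?_
  rw [wc, ← Complex.exp_nat_mul]
  congr 1
  push_cast
  ring

/-! ### The product vectors -/

def vv (k : ℕ) (t : Fin k) (i : Fin 2) : ℂ :=
  (((Real.sqrt 2)⁻¹ : ℝ) : ℂ) * wc k ((t:ℤ) * (i:ℤ))

def uu {q k : ℕ} (f : Fin k → Fin q) (t : Fin k) (a : Fin q) : ℂ :=
  (((Real.sqrt k)⁻¹ : ℝ) : ℂ) * ∑ m : Fin k, if f m = a then wc k (-((t:ℤ) * (m:ℤ))) else 0

lemma conj_vv (k : ℕ) (t : Fin k) (i : Fin 2) :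
    (starRingEnd ℂ) (vv k t i) = (((Real.sqrt 2)⁻¹ : ℝ) : ℂ) * wc k (-((t:ℤ) * (i:ℤ))) := by
  simp only [vv, _root_.map_mul, Complex.conj_ofReal, wc_conj]

lemma conj_uu {q k : ℕ} (f : Fin k → Fin q) (t : Fin k) (a : Fin q) :
    (starRingEnd ℂ) (uu f t a)
      = (((Real.sqrt k)⁻¹ : ℝ) : ℂ) * ∑ m : Fin k, if f m = a then wc k ((t:ℤ) * (m:ℤ)) else 0 := by
  simp only [uu, _root_.map_mul, Complex.conj_ofReal, map_sum, apply_ite, map_zero, wc_conj,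
    neg_neg]

lemma sqrt2_sq : ((Real.sqrt 2 : ℝ) : ℂ)⁻¹ * ((Real.sqrt 2 : ℝ) : ℂ)⁻¹ = (2:ℂ)⁻¹ := by
  rw [← mul_inv, ← Complex.ofReal_mul, Real.mul_self_sqrt (by norm_num)]
  norm_num

lemma sqrtk_sq (k : ℕ) :
    ((Real.sqrt (k:ℝ) : ℝ) : ℂ)⁻¹ * ((Real.sqrt (k:ℝ) : ℝ) : ℂ)⁻¹ = ((k:ℕ) : ℂ)⁻¹ := by
  rw [← mul_inv, ← Complex.ofReal_mul, Real.mul_self_sqrt (Nat.cast_nonneg k)]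
  push_cast
  ring

/-! ### Outer products -/

lemma posSemidef_outer {n : Type*} [Fintype n] (u : n → ℂ) :
    (Matrix.vecMulVec u (star u)).PosSemidef := by
  rw [Matrix.posSemidef_iff_dotProduct_mulVec]
  constructor
  · ext a b
    simp [Matrix.vecMulVec_apply, Matrix.conjTranspose_apply, Pi.star_apply, mul_comm]
  · intro x
    have key : dotProduct (star x) ((Matrix.vecMulVec u (star u)) *ᵥ x)
        = star (dotProduct (star u) x) * (dotProduct (star u) x) := by
      simp only [dotProduct, Matrix.mulVec, Matrix.vecMulVec_apply, Pi.star_apply,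
        star_sum, star_mul', star_star, Finset.mul_sum, Finset.sum_mul]
      rw [Finset.sum_comm]
      refine Finset.sum_congr rfl fun a _ => Finset.sum_congr rfl fun b _ => ?_
      ring
    rw [key]
    exact star_mul_self_nonneg _

lemma trace_outer {n : Type*} [Fintype n] (u : n → ℂ) :
    (Matrix.vecMulVec u (star u)).trace = ∑ a, u a * (starRingEnd ℂ) (u a) := by
  simp [Matrix.trace, Matrix.diag, Matrix.vecMulVec_apply]

lemma isDensity_outer {n : Type*} [Fintype n] (u : n → ℂ)
    (hu : ∑ a, u a * (starRingEnd ℂ) (u a) = 1) :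
    IsDensityMatrix (Matrix.vecMulVec u (star u)) :=
  ⟨(posSemidef_outer u).1, posSemidef_outer u, (trace_outer u).trans hu⟩

lemma kron_outer {p q : Type*} (v : p → ℂ) (u : q → ℂ) :
    (Matrix.vecMulVec v (star v)) ⊗ₖ (Matrix.vecMulVec u (star u))
      = Matrix.vecMulVec (fun x : p × q => v x.1 * u x.2)
          (star (fun x : p × q => v x.1 * u x.2)) := by
  ext ⟨i, a⟩ ⟨j, b⟩
  simp [Matrix.kroneckerMap_apply, Matrix.vecMulVec_apply, Pi.star_apply, star_mul']
  ring

lemma sum_apply_outer {k q : ℕ} (f : Fin k → Fin q) (hf : Function.Injective f)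
    (x y : Fin k → ℂ) :
    ∑ a : Fin q, (∑ m : Fin k, if f m = a then x m else 0) *
        (∑ n : Fin k, if f n = a then y n else 0)
      = ∑ m : Fin k, x m * y m := by
  calc ∑ a : Fin q, (∑ m : Fin k, if f m = a then x m else 0) *
        (∑ n : Fin k, if f n = a then y n else 0)
      = ∑ a : Fin q, ∑ m : Fin k, ∑ n : Fin k,
          (if f m = a then x m else 0) * (if f n = a then y n else 0) := by
        refine Finset.sum_congr rfl fun a _ => ?_
        rw [Finset.sum_mul_sum]
    _ = ∑ m : Fin k, ∑ n : Fin k, ∑ a : Fin q,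
          (if f m = a then x m else 0) * (if f n = a then y n else 0) := by
        rw [Finset.sum_comm]
        exact Finset.sum_congr rfl fun m _ => Finset.sum_comm
    _ = ∑ m : Fin k, x m * y m := by
        refine Finset.sum_congr rfl fun m _ => ?_
        have hinner : ∀ n : Fin k, ∑ a : Fin q,
            (if f m = a then x m else 0) * (if f n = a then y n else 0)
            = if n = m then x m * y n else 0 := by
          intro n
          rw [Finset.sum_eq_single (f m)]
          · by_cases h : n = m
            · subst h
              rw [if_pos rfl, if_pos rfl, if_pos rfl]
            · rw [if_pos rfl, if_neg (fun hc => h (hf hc)), if_neg h, mul_zero]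
          · intro b _ hb
            rw [if_neg (fun hc : f m = b => hb hc.symm), zero_mul]
          · intro h; exact absurd (Finset.mem_univ _) h
        rw [Finset.sum_congr rfl fun n _ => hinner n,
          Finset.sum_ite_eq' Finset.univ m (fun n => x m * y n)]
        simp

/-! ### Entry computation, complex side -/

lemma step1 {q k : ℕ} (hk : 0 < k) (f : Fin k → Fin q)
    (i i' : Fin 2) (a a' : Fin q) (t : Fin k) :
    (((k:ℝ)⁻¹ : ℝ) : ℂ) *
      ((vv k t i * (starRingEnd ℂ) (vv k t i')) * (uu f t a * (starRingEnd ℂ) (uu f t a')))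
      = (2:ℂ)⁻¹ * ((k:ℝ)⁻¹:ℂ) * ((k:ℝ)⁻¹:ℂ) * ∑ m : Fin k, ∑ n : Fin k,
          ((if f m = a then (1:ℂ) else 0) * (if f n = a' then 1 else 0)
            * wc k (((i:ℤ) - (i':ℤ) + (n:ℤ) - (m:ℤ)) * (t:ℤ))) := by
  rw [conj_vv, conj_uu, vv, uu]
  simp only [Finset.mul_sum, Finset.sum_mul]
  rw [Finset.sum_comm]
  refine Finset.sum_congr rfl fun m _ => ?_
  refine Finset.sum_congr rfl fun n _ => ?_
  by_cases hP : f m = a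
  · by_cases hQ : f n = a'
    · simp only [if_pos hP, if_pos hQ]
      have hw : wc k ((t:ℤ)*(i:ℤ)) * wc k (-((t:ℤ)*(i':ℤ)))
            * (wc k (-((t:ℤ)*(m:ℤ))) * wc k ((t:ℤ)*(n:ℤ)))
          = wc k (((i:ℤ) - (i':ℤ) + (n:ℤ) - (m:ℤ)) * (t:ℤ)) := by
        rw [wc_mul, wc_mul, wc_mul]
        congr 1
        ring
      push_cast
      calc ((k:ℂ))⁻¹ * ((Real.sqrt 2 : ℂ)⁻¹ * wc k ((t:ℤ)*(i:ℤ))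
              * ((Real.sqrt 2 : ℂ)⁻¹ * wc k (-((t:ℤ)*(i':ℤ))))
              * ((Real.sqrt (k:ℝ) : ℂ)⁻¹ * wc k (-((t:ℤ)*(m:ℤ)))
                * ((Real.sqrt (k:ℝ) : ℂ)⁻¹ * wc k ((t:ℤ)*(n:ℤ)))))
          = ((Real.sqrt 2 : ℂ)⁻¹ * (Real.sqrt 2 : ℂ)⁻¹)
              * ((Real.sqrt (k:ℝ) : ℂ)⁻¹ * (Real.sqrt (k:ℝ) : ℂ)⁻¹) * ((k:ℂ))⁻¹
              * (wc k ((t:ℤ)*(i:ℤ)) * wc k (-((t:ℤ)*(i':ℤ)))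
                * (wc k (-((t:ℤ)*(m:ℤ))) * wc k ((t:ℤ)*(n:ℤ)))) := by ring
        _ = (2:ℂ)⁻¹ * ((k:ℕ):ℂ)⁻¹ * ((k:ℂ))⁻¹
              * wc k (((i:ℤ) - (i':ℤ) + (n:ℤ) - (m:ℤ)) * (t:ℤ)) := by
            rw [sqrt2_sq, sqrtk_sq, hw]
        _ = (2:ℂ)⁻¹ * ((k:ℂ))⁻¹ * ((k:ℂ))⁻¹
              * (1 * 1 * wc k (((i:ℤ) - (i':ℤ) + (n:ℤ) - (m:ℤ)) * (t:ℤ))) := by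
            push_cast
            ring
    · simp only [if_neg hQ]
      ring
  · simp only [if_neg hP]
    ring

lemma keyA {q k : ℕ} (hk : 0 < k) (f : Fin k → Fin q)
    (i i' : Fin 2) (a a' : Fin q) :
    ∑ t : Fin k, (((k:ℝ)⁻¹ : ℝ) : ℂ) *
      ((vv k t i * (starRingEnd ℂ) (vv k t i')) * (uu f t a * (starRingEnd ℂ) (uu f t a')))
      = (((2*(k:ℝ))⁻¹ : ℝ) : ℂ) * ∑ m : Fin k, ∑ n : Fin k,
          (if f m = a then (1:ℂ) else 0) * (if f n = a' then 1 else 0)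
            * (if (k:ℤ) ∣ ((i:ℤ) - (i':ℤ) + (n:ℤ) - (m:ℤ)) then 1 else 0) := by
  have hk0 : (k:ℂ) ≠ 0 := Nat.cast_ne_zero.mpr hk.ne'
  calc ∑ t : Fin k, (((k:ℝ)⁻¹ : ℝ) : ℂ) *
      ((vv k t i * (starRingEnd ℂ) (vv k t i')) * (uu f t a * (starRingEnd ℂ) (uu f t a')))
      = ∑ t : Fin k, (2:ℂ)⁻¹ * ((k:ℝ)⁻¹:ℂ) * ((k:ℝ)⁻¹:ℂ) * ∑ m : Fin k, ∑ n : Fin k,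
          ((if f m = a then (1:ℂ) else 0) * (if f n = a' then 1 else 0)
            * wc k (((i:ℤ) - (i':ℤ) + (n:ℤ) - (m:ℤ)) * (t:ℤ))) :=
        Finset.sum_congr rfl fun t _ => step1 hk f i i' a a' t
    _ = (2:ℂ)⁻¹ * ((k:ℝ)⁻¹:ℂ) * ((k:ℝ)⁻¹:ℂ) * ∑ t : Fin k, ∑ m : Fin k, ∑ n : Fin k,
          ((if f m = a then (1:ℂ) else 0) * (if f n = a' then 1 else 0)
            * wc k (((i:ℤ) - (i':ℤ) + (n:ℤ) - (m:ℤ)) * (t:ℤ))) := by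
        rw [Finset.mul_sum]
    _ = (2:ℂ)⁻¹ * ((k:ℝ)⁻¹:ℂ) * ((k:ℝ)⁻¹:ℂ) * ∑ m : Fin k, ∑ n : Fin k, ∑ t : Fin k,
          ((if f m = a then (1:ℂ) else 0) * (if f n = a' then 1 else 0)
            * wc k (((i:ℤ) - (i':ℤ) + (n:ℤ) - (m:ℤ)) * (t:ℤ))) := by
        refine congrArg _ ?_
        rw [Finset.sum_comm]
        exact Finset.sum_congr rfl fun m _ => Finset.sum_comm
    _ = (2:ℂ)⁻¹ * ((k:ℝ)⁻¹:ℂ) * ((k:ℝ)⁻¹:ℂ) * ∑ m : Fin k, ∑ n : Fin k,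
          ((if f m = a then (1:ℂ) else 0) * (if f n = a' then 1 else 0)
            * (if (k:ℤ) ∣ ((i:ℤ) - (i':ℤ) + (n:ℤ) - (m:ℤ)) then (k:ℂ) else 0)) := by
        refine congrArg _ (Finset.sum_congr rfl fun m _ => Finset.sum_congr rfl fun n _ => ?_)
        rw [← Finset.mul_sum, wc_sum hk]
    _ = (((2*(k:ℝ))⁻¹ : ℝ) : ℂ) * ∑ m : Fin k, ∑ n : Fin k,
          (if f m = a then (1:ℂ) else 0) * (if f n = a' then 1 else 0)
            * (if (k:ℤ) ∣ ((i:ℤ) - (i':ℤ) + (n:ℤ) - (m:ℤ)) then 1 else 0) := by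
        rw [Finset.mul_sum, Finset.mul_sum]
        refine Finset.sum_congr rfl fun m _ => ?_
        rw [Finset.mul_sum, Finset.mul_sum]
        refine Finset.sum_congr rfl fun n _ => ?_
        split_ifs with h1 h2 h3 <;> push_cast <;> field_simp <;> ring

/-! ### Entry computation, real side -/

def sg {k : ℕ} (hk : 0 < k) (m : Fin k) : Fin k := ⟨((m : ℕ) + 1) % k, Nat.mod_lt _ hk⟩

section KeyB

variable {q k : ℕ} (hk : 0 < k) (f : Fin k → Fin q) (hf : Function.Injective f)
  (C : Matrix (Fin q) (Fin q) ℝ)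
  (hCf : ∀ a b : Fin q, C a b =
      if ∃ m : Fin k, a = f m ∧ b = f ⟨((m : ℕ) + 1) % k, Nat.mod_lt _ hk⟩ then 1 else 0)

include hf hCf in
lemma hCsum : ∀ a b : Fin q,
    C a b = ∑ m : Fin k, if a = f m ∧ b = f (sg hk m) then (1:ℝ) else 0 := by
  intro a b
  rw [hCf a b]
  exact sum_ite_exists _ fun m n hm hn => hf (hm.1.symm.trans hn.1)

include hf hCf in
lemma rowsum : ∀ a : Fin q, (∑ j, C a j) = ∑ m : Fin k, if f m = a then (1:ℝ) else 0 := by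
  intro a
  calc ∑ j, C a j = ∑ j, ∑ m : Fin k, if a = f m ∧ j = f (sg hk m) then (1:ℝ) else 0 :=
        Finset.sum_congr rfl fun j _ => hCsum hk f hf C hCf a j
    _ = ∑ m : Fin k, ∑ j, if a = f m ∧ j = f (sg hk m) then (1:ℝ) else 0 := Finset.sum_comm
    _ = ∑ m : Fin k, if f m = a then (1:ℝ) else 0 := by
        refine Finset.sum_congr rfl fun m _ => ?_
        by_cases h : a = f m
        · simp [h, Finset.sum_ite_eq']
        · rw [Finset.sum_eq_zero fun j _ => by rw [if_neg (fun hc => h hc.1)],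
            if_neg (fun hh : f m = a => h hh.symm)]

include hf hCf in
lemma traceD (D : Matrix (Fin q) (Fin q) ℝ) (hD : D = Matrix.diagonal (fun i => ∑ j, C i j)) :
    D.trace = (k:ℝ) := by
  subst hD
  rw [Matrix.trace_diagonal]
  calc ∑ a, ∑ j, C a j = ∑ a, ∑ m : Fin k, if f m = a then (1:ℝ) else 0 :=
        Finset.sum_congr rfl fun a _ => rowsum hk f hf C hCf a
    _ = ∑ m : Fin k, ∑ a, if f m = a then (1:ℝ) else 0 := Finset.sum_comm
    _ = ∑ m : Fin k, (1:ℝ) := Finset.sum_congr rfl fun m _ => by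
        rw [Finset.sum_ite_eq Finset.univ (f m) (fun _ => (1:ℝ))]
        simp
    _ = (k:ℝ) := by simp

include hk in
lemma h00 (m n : Fin k) : ((k:ℤ) ∣ ((n:ℤ) - (m:ℤ))) ↔ n = m := by
  have hm := m.isLt
  have hn := n.isLt
  rw [aux_dvd (by exact_mod_cast hk) (by omega) (by omega), Fin.ext_iff]
  omega

include hk in
lemma h01 (m n : Fin k) : ((k:ℤ) ∣ ((0:ℤ) - 1 + (n:ℤ) - (m:ℤ))) ↔ n = sg hk m := by
  have hm := m.isLt
  have hn := n.isLt
  have hmod : ((m:ℕ) + 1) % k = if (m:ℕ) + 1 = k then 0 else (m:ℕ) + 1 := by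
    rcases Nat.lt_or_ge ((m:ℕ)+1) k with h | h
    · rw [Nat.mod_eq_of_lt h, if_neg (by omega)]
    · have : (m:ℕ) + 1 = k := by omega
      rw [this, Nat.mod_self, if_pos rfl]
  rw [aux_dvd (by exact_mod_cast hk) (by omega) (by omega), Fin.ext_iff]
  simp only [sg, Fin.val_mk]
  rw [hmod]
  split_ifs <;> omega

include hk in
lemma h10 (m n : Fin k) : ((k:ℤ) ∣ ((1:ℤ) - 0 + (n:ℤ) - (m:ℤ))) ↔ m = sg hk n := by
  rw [← dvd_neg, show -((1:ℤ) - 0 + (n:ℤ) - (m:ℤ)) = (0:ℤ) - 1 + (m:ℤ) - (n:ℤ) from by ring]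
  exact h01 hk n m

lemma sum2_collapse (a a' : Fin q) (e : Fin k → Fin k)
    (P : Fin k → Fin k → Prop) [∀ m n, Decidable (P m n)]
    (hP : ∀ m n, P m n ↔ n = e m) :
    ∑ m : Fin k, ∑ n : Fin k, (if f m = a then (1:ℝ) else 0) * (if f n = a' then 1 else 0) *
        (if P m n then 1 else 0)
      = ∑ m : Fin k, (if f m = a then (1:ℝ) else 0) * (if f (e m) = a' then 1 else 0) := by
  refine Finset.sum_congr rfl fun m _ => ?_
  rw [Finset.sum_eq_single (e m)]
  · rw [if_pos ((hP m (e m)).mpr rfl), mul_one]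
  · intro n _ hn
    rw [if_neg (fun hp => hn ((hP m n).mp hp)), mul_zero]
  · intro h; exact absurd (Finset.mem_univ _) h

include hf hCf in
lemma hDval (D : Matrix (Fin q) (Fin q) ℝ) (hD : D = Matrix.diagonal (fun i => ∑ j, C i j))
    (a a' : Fin q) :
    D a a' = if a = a' then (∑ m : Fin k, if f m = a then (1:ℝ) else 0) else 0 := by
  rw [hD]
  by_cases h : a = a'
  · subst h
    rw [Matrix.diagonal_apply_eq, if_pos rfl, rowsum hk f hf C hCf a]
  · rw [Matrix.diagonal_apply_ne _ h, if_neg h]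

include hf hCf in
lemma diag_case (D : Matrix (Fin q) (Fin q) ℝ) (hD : D = Matrix.diagonal (fun i => ∑ j, C i j))
    (a a' : Fin q) :
    D a a' = ∑ m : Fin k, ∑ n : Fin k, (if f m = a then (1:ℝ) else 0) *
        (if f n = a' then 1 else 0) * (if (k:ℤ) ∣ ((n:ℤ) - (m:ℤ)) then 1 else 0) := by
  rw [sum2_collapse f a a' id _ (fun m n => h00 hk m n), hDval hk f hf C hCf D hD]
  by_cases haa : a = a'
  · subst haa
    rw [if_pos rfl]
    refine Finset.sum_congr rfl fun m _ => ?_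
    by_cases h : f m = a <;> simp [h]
  · rw [if_neg haa, eq_comm]
    refine Finset.sum_eq_zero fun m _ => ?_
    by_cases h1 : f m = a
    · by_cases h2 : f m = a'
      · exact absurd (h1.symm.trans h2) haa
      · simp [h2]
    · simp [h1]

include hf hCf in
lemma offdiag_case (a a' : Fin q) :
    C a a' = ∑ m : Fin k, ∑ n : Fin k, (if f m = a then (1:ℝ) else 0) *
        (if f n = a' then 1 else 0) * (if (k:ℤ) ∣ ((0:ℤ) - 1 + (n:ℤ) - (m:ℤ)) then 1 else 0) := by
  rw [sum2_collapse f a a' (sg hk) _ (fun m n => h01 hk m n), hCsum hk f hf C hCf a a']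
  refine Finset.sum_congr rfl fun m _ => ?_
  by_cases h1 : f m = a
  · by_cases h2 : f (sg hk m) = a'
    · rw [if_pos ⟨h1.symm, h2.symm⟩, if_pos h1, if_pos h2, mul_one]
    · rw [if_neg (fun hc => h2 hc.2.symm), if_neg h2, mul_zero]
  · rw [if_neg (fun hc => h1 hc.1.symm), if_neg h1, zero_mul]

include hf hCf in
lemma offdiag_case' (a a' : Fin q) :
    Cᵀ a a' = ∑ m : Fin k, ∑ n : Fin k, (if f m = a then (1:ℝ) else 0) *
        (if f n = a' then 1 else 0) * (if (k:ℤ) ∣ ((1:ℤ) - 0 + (n:ℤ) - (m:ℤ)) then 1 else 0) := by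
  rw [Matrix.transpose_apply, offdiag_case hk f hf C hCf a' a, Finset.sum_comm]
  refine Finset.sum_congr rfl fun x _ => Finset.sum_congr rfl fun y _ => ?_
  have hiff : ((k:ℤ) ∣ ((0:ℤ) - 1 + (x:ℤ) - (y:ℤ))) ↔ ((k:ℤ) ∣ ((1:ℤ) - 0 + (y:ℤ) - (x:ℤ))) := by
    rw [← dvd_neg]
    constructor <;> intro h <;>
      · convert h using 1
        · rfl
        · ring
  rw [if_congr hiff rfl rfl]
  ring

include hf hCf in
lemma keyB (D : Matrix (Fin q) (Fin q) ℝ) (hD : D = Matrix.diagonal (fun i => ∑ j, C i j))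
    (i i' : Fin 2) (a a' : Fin q) :
    twoBlock D C Cᵀ D (i, a) (i', a')
      = ∑ m : Fin k, ∑ n : Fin k, (if f m = a then (1:ℝ) else 0) * (if f n = a' then 1 else 0)
          * (if (k:ℤ) ∣ ((i:ℤ) - (i':ℤ) + (n:ℤ) - (m:ℤ)) then 1 else 0) := by
  fin_cases i <;> fin_cases i' <;>
    simp only [twoBlock, Fin.isValue, Fin.val_zero, Fin.val_one, Nat.cast_zero, Nat.cast_one,
      Fin.zero_eta, Fin.mk_one, if_true, if_false]
  · exact (diag_case hk f hf C hCf D hD a a').trans (by norm_num)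
  · exact (offdiag_case hk f hf C hCf a a').trans (by norm_num)
  · exact (offdiag_case' hk f hf C hCf a a').trans (by norm_num)
  · exact (diag_case hk f hf C hCf D hD a a').trans (by norm_num)

end KeyB

/-! ### Normalization of the vectors -/

lemma vv_norm {k : ℕ} (t : Fin k) :
    ∑ i : Fin 2, vv k t i * (starRingEnd ℂ) (vv k t i) = 1 := by
  have h : ∀ i : Fin 2, vv k t i * (starRingEnd ℂ) (vv k t i) = (2:ℂ)⁻¹ := by
    intro i
    rw [conj_vv, vv]
    calc (((Real.sqrt 2)⁻¹:ℝ):ℂ) * wc k ((t:ℤ)*(i:ℤ))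
          * ((((Real.sqrt 2)⁻¹:ℝ):ℂ) * wc k (-((t:ℤ)*(i:ℤ))))
        = ((((Real.sqrt 2)⁻¹:ℝ):ℂ) * (((Real.sqrt 2)⁻¹:ℝ):ℂ))
            * (wc k ((t:ℤ)*(i:ℤ)) * wc k (-((t:ℤ)*(i:ℤ)))) := by ring
      _ = (2:ℂ)⁻¹ := by
          rw [wc_mul, show ((t:ℤ)*(i:ℤ)) + -((t:ℤ)*(i:ℤ)) = 0 from by ring, wc_zero, mul_one]
          push_cast
          exact sqrt2_sq
  rw [Fin.sum_univ_two, h 0, h 1]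
  norm_num

lemma uu_norm {q k : ℕ} (hk : 0 < k) (f : Fin k → Fin q) (hf : Function.Injective f)
    (t : Fin k) :
    ∑ a : Fin q, uu f t a * (starRingEnd ℂ) (uu f t a) = 1 := by
  have hk0 : (k:ℂ) ≠ 0 := Nat.cast_ne_zero.mpr hk.ne'
  calc ∑ a : Fin q, uu f t a * (starRingEnd ℂ) (uu f t a)
      = ∑ a : Fin q, (((Real.sqrt k)⁻¹:ℝ):ℂ) * (((Real.sqrt k)⁻¹:ℝ):ℂ) *
          ((∑ m : Fin k, if f m = a then wc k (-((t:ℤ)*(m:ℤ))) else 0) *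
            (∑ n : Fin k, if f n = a then wc k ((t:ℤ)*(n:ℤ)) else 0)) := by
        refine Finset.sum_congr rfl fun a _ => ?_
        rw [conj_uu, uu]
        ring
    _ = (((Real.sqrt k)⁻¹:ℝ):ℂ) * (((Real.sqrt k)⁻¹:ℝ):ℂ) *
          ∑ a : Fin q, ((∑ m : Fin k, if f m = a then wc k (-((t:ℤ)*(m:ℤ))) else 0) *
            (∑ n : Fin k, if f n = a then wc k ((t:ℤ)*(n:ℤ)) else 0)) := by
        rw [Finset.mul_sum]
    _ = (((Real.sqrt k)⁻¹:ℝ):ℂ) * (((Real.sqrt k)⁻¹:ℝ):ℂ) *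
          ∑ m : Fin k, wc k (-((t:ℤ)*(m:ℤ))) * wc k ((t:ℤ)*(m:ℤ)) := by
        rw [sum_apply_outer f hf]
    _ = (((Real.sqrt k)⁻¹:ℝ):ℂ) * (((Real.sqrt k)⁻¹:ℝ):ℂ) * (k:ℂ) := by
        rw [Finset.sum_congr rfl fun m _ => by
          rw [wc_mul, show -((t:ℤ)*(m:ℤ)) + (t:ℤ)*(m:ℤ) = 0 from by ring, wc_zero]]
        simp
    _ = 1 := by
        push_cast
        rw [sqrtk_sq]
        push_cast
        field_simp

lemma sum_mulVec' {n ι : Type*} [Fintype n] [Fintype ι] (M : ι → Matrix n n ℂ) (x : n → ℂ) :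
    (∑ t, M t) *ᵥ x = ∑ t, M t *ᵥ x := by
  funext r
  simp only [Matrix.mulVec, dotProduct, Matrix.sum_apply, Finset.sum_apply, Finset.sum_mul]
  rw [Finset.sum_comm]

lemma dotProduct_sum' {n ι : Type*} [Fintype n] [Fintype ι] (v : n → ℂ) (w : ι → n → ℂ) :
    dotProduct v (∑ t, w t) = ∑ t, dotProduct v (w t) := by
  simp only [dotProduct, Finset.sum_apply, Finset.mul_sum]
  rw [Finset.sum_comm]

/-- for a simple circuit matrix C with row-sum diagonal D, the block
matrix (1/(2 tr D)) [[D, C],[Cᵀ, D]] is a density matrix and separable in ℂ² ⊗ ℂ^q. -/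
theorem stmt7 {q : ℕ} (C : Matrix (Fin q) (Fin q) ℝ) (hC : IsSimpleCircuit C)
    (D : Matrix (Fin q) (Fin q) ℝ)
    (hD : D = Matrix.diagonal (fun i => ∑ j, C i j))
    (A : Matrix (Fin 2 × Fin q) (Fin 2 × Fin q) ℝ)
    (hA : A = (1 / (2 * D.trace)) • twoBlock D C Cᵀ D) :
    IsDensityMatrix (A.map (fun x => (x : ℂ))) ∧ SeparableStateR A := by
  obtain ⟨k, hk, f, hf, hCf⟩ := hC
  have hk0C : (k:ℂ) ≠ 0 := Nat.cast_ne_zero.mpr hk.ne'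
  have hk0R : (k:ℝ) ≠ 0 := Nat.cast_ne_zero.mpr hk.ne'
  have htr : D.trace = (k:ℝ) := traceD hk f hf C hCf D hD
  set W : Fin k → (Fin 2 × Fin q) → ℂ := fun t p => vv k t p.1 * uu f t p.2 with hW
  have hρd : ∀ t, IsDensityMatrix (Matrix.vecMulVec (vv k t) (star (vv k t))) :=
    fun t => isDensity_outer _ (vv_norm t)
  have hηd : ∀ t, IsDensityMatrix (Matrix.vecMulVec (uu f t) (star (uu f t))) :=
    fun t => isDensity_outer _ (uu_norm hk f hf t)
  have hdec : A.map (fun x => (x : ℂ)) = ∑ t : Fin k, (((k:ℝ)⁻¹ : ℝ) : ℂ) •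
      ((Matrix.vecMulVec (vv k t) (star (vv k t))) ⊗ₖ
        (Matrix.vecMulVec (uu f t) (star (uu f t)))) := by
    ext ⟨i, a⟩ ⟨i', a'⟩
    rw [Matrix.map_apply, Matrix.sum_apply]
    have hterm : ∀ t : Fin k,
        ((((k:ℝ)⁻¹ : ℝ) : ℂ) • ((Matrix.vecMulVec (vv k t) (star (vv k t))) ⊗ₖ
          (Matrix.vecMulVec (uu f t) (star (uu f t))))) (i,a) (i',a')
        = (((k:ℝ)⁻¹ : ℝ) : ℂ) * ((vv k t i * (starRingEnd ℂ) (vv k t i'))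
            * (uu f t a * (starRingEnd ℂ) (uu f t a'))) := by
      intro t
      simp only [Matrix.smul_apply, Matrix.kroneckerMap_apply, Matrix.vecMulVec_apply,
        Pi.star_apply, Complex.star_def, smul_eq_mul]
    rw [Finset.sum_congr rfl fun t _ => hterm t, keyA hk f i i' a a']
    rw [hA, Matrix.smul_apply, htr, keyB hk f hf C hCf D hD i i' a a']
    rw [smul_eq_mul]
    push_cast [apply_ite Complex.ofReal]
    ring
  have hsep : SeparableStateR A := by
    refine ⟨k, fun _ => (k:ℝ)⁻¹, fun t => Matrix.vecMulVec (vv k t) (star (vv k t)),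
      fun t => Matrix.vecMulVec (uu f t) (star (uu f t)),
      fun _ => inv_nonneg.mpr (Nat.cast_nonneg k), ?_, hρd, hηd, hdec⟩
    rw [Finset.sum_const, Finset.card_univ, Fintype.card_fin, nsmul_eq_mul]
    field_simp
  have hdec2 : A.map (fun x => (x:ℂ)) = ∑ t : Fin k, (((k:ℝ)⁻¹ : ℝ):ℂ) •
      Matrix.vecMulVec (W t) (star (W t)) := by
    rw [hdec]
    exact Finset.sum_congr rfl fun t _ => by rw [kron_outer]
  have hherm : (A.map (fun x => (x:ℂ))).IsHermitian := by
    rw [Matrix.IsHermitian, hdec2, Matrix.conjTranspose_sum]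
    refine Finset.sum_congr rfl fun t _ => ?_
    rw [Matrix.conjTranspose_smul, (posSemidef_outer (W t)).1.eq]
    congr 1
    simp [Complex.star_def, Complex.conj_ofReal]
  have hpsd : (A.map (fun x => (x:ℂ))).PosSemidef := by
    refine Matrix.PosSemidef.of_dotProduct_mulVec_nonneg hherm fun x => ?_
    rw [hdec2, sum_mulVec', dotProduct_sum']
    refine Finset.sum_nonneg fun t _ => ?_
    rw [Matrix.smul_mulVec, dotProduct_smul, smul_eq_mul]
    exact mul_nonneg (Complex.zero_le_real.mpr (by positivity)) ((posSemidef_outer (W t)).dotProduct_mulVec_nonneg x)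
  have htrace : (A.map (fun x => (x:ℂ))).trace = 1 := by
    rw [hdec, Matrix.trace_sum]
    rw [Finset.sum_congr rfl fun t _ => by
      rw [Matrix.trace_smul, Matrix.trace_kronecker, (hρd t).2.2, (hηd t).2.2, mul_one,
        smul_eq_mul, mul_one]]
    rw [Finset.sum_const, Finset.card_univ, Fintype.card_fin, nsmul_eq_mul]
    push_cast
    field_simp
  exact ⟨⟨hherm, hpsd, htrace⟩, hsep⟩
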